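/- In the H(S, σ) setting, suppose S ⊆ S' are two subgroups of T, each satisfying the invariance and cocycle conditions with respect to the same function σ. Then H(S, σ) ⊆ H(S', σ); the subgroup H(S, σ) is normal in H(S', σ) if and only if S' ⊆ S⁺; and in that case the quotient group H(S', σ)/H(S, σ) is isomorphic to S'/S. -/

import Mathlib

/-- The set `H(S, σ) = { σ(w) s : w ∈ W, s ∈ S }` of a full subgroup datum. -/
def fullSet {G : Type*} [Group G] (T : Subgroup G) (σ : G ⧸ T → G) (S : Set G) : Set G :=
  {g : G | ∃ w : G ⧸ T, ∃ s ∈ S, g = σ w * s}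

/-- The set `S⁺ = { t ∈ T : σ(w)⁻¹ t σ(w) t⁻¹ ∈ S for all w ∈ W }`. -/
def splusSet {G : Type*} [Group G] (T : Subgroup G) (σ : G ⧸ T → G) (S : Subgroup G) :
    Set G :=
  {t : G | t ∈ T ∧ ∀ w : G ⧸ T, (σ w)⁻¹ * t * σ w * t⁻¹ ∈ S}

/-- In the `H(S, σ)` setting, let `S ⊆ S'` be two subgroups of the
abelian normal subgroup `T` each satisfying the invariance and cocycle conditions with
respect to the same section `σ`.  Then `H(S, σ) ⊆ H(S', σ)`; the subgroup `H(S, σ)` is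
normal in `H(S', σ)` if and only if `S' ⊆ S⁺`; and in that case the quotient group
`H(S', σ)/H(S, σ)` is isomorphic to `S'/S`. -/
theorem full_subgroup_normality_and_quotient
    {G : Type*} [Group G] (T : Subgroup G) [T.Normal]
    (hTab : ∀ a b : G, a ∈ T → b ∈ T → a * b = b * a)
    (σ : G ⧸ T → G) (hσ : ∀ w : G ⧸ T, (QuotientGroup.mk (σ w) : G ⧸ T) = w)
    (S S' : Subgroup G) (hSS' : S ≤ S') (hST : S ≤ T) (hS'T : S' ≤ T)
    (hSinv : ∀ w : G ⧸ T, ∀ s : G, s ∈ S → (σ w)⁻¹ * s * σ w ∈ S)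
    (hSinv' : ∀ w : G ⧸ T, ∀ s : G, s ∈ S → σ w * s * (σ w)⁻¹ ∈ S)
    (hcoc : ∀ v w : G ⧸ T, σ v * σ w * (σ (v * w))⁻¹ ∈ S)
    (hS'inv : ∀ w : G ⧸ T, ∀ s : G, s ∈ S' → (σ w)⁻¹ * s * σ w ∈ S')
    (hS'inv' : ∀ w : G ⧸ T, ∀ s : G, s ∈ S' → σ w * s * (σ w)⁻¹ ∈ S')
    (hcoc' : ∀ v w : G ⧸ T, σ v * σ w * (σ (v * w))⁻¹ ∈ S')
    (HS HS' : Subgroup G)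
    (hHS : (HS : Set G) = fullSet T σ (S : Set G))
    (hHS' : (HS' : Set G) = fullSet T σ (S' : Set G)) :
    (HS : Set G) ⊆ (HS' : Set G) ∧
    ((HS.subgroupOf HS').Normal ↔ (S' : Set G) ⊆ splusSet T σ S) ∧
    (∀ [_h1 : (HS.subgroupOf HS').Normal] [_h2 : (S.subgroupOf S').Normal],
      Nonempty ((↥HS' ⧸ HS.subgroupOf HS') ≃* (↥S' ⧸ S.subgroupOf S'))) := by
  -- membership characterizations
  have memHS : ∀ g : G, g ∈ HS ↔ (σ (QuotientGroup.mk g))⁻¹ * g ∈ S := by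
    intro g
    constructor
    · intro hg
      have hg' : g ∈ fullSet T σ (S : Set G) := by rw [← hHS]; exact hg
      obtain ⟨w, s, hs, rfl⟩ := hg'
      have hw : (QuotientGroup.mk (σ w * s) : G ⧸ T) = w := by
        rw [QuotientGroup.mk_mul, hσ, (QuotientGroup.eq_one_iff s).mpr (hST hs), mul_one]
      rw [hw]
      simpa using hs
    · intro h
      have : g ∈ fullSet T σ (S : Set G) :=
        ⟨QuotientGroup.mk g, (σ (QuotientGroup.mk g))⁻¹ * g, h, by group⟩
      rw [← SetLike.mem_coe, hHS]; exact this
  have memHS' : ∀ g : G, g ∈ HS' ↔ (σ (QuotientGroup.mk g))⁻¹ * g ∈ S' := by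
    intro g
    constructor
    · intro hg
      have hg' : g ∈ fullSet T σ (S' : Set G) := by rw [← hHS']; exact hg
      obtain ⟨w, s, hs, rfl⟩ := hg'
      have hw : (QuotientGroup.mk (σ w * s) : G ⧸ T) = w := by
        rw [QuotientGroup.mk_mul, hσ, (QuotientGroup.eq_one_iff s).mpr (hS'T hs), mul_one]
      rw [hw]
      simpa using hs
    · intro h
      have : g ∈ fullSet T σ (S' : Set G) :=
        ⟨QuotientGroup.mk g, (σ (QuotientGroup.mk g))⁻¹ * g, h, by group⟩
      rw [← SetLike.mem_coe, hHS']; exact this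
  have hσ1S : σ 1 ∈ S := by
    have h := hcoc 1 1
    rw [one_mul] at h
    simpa using h
  have hσHS : ∀ w : G ⧸ T, σ w ∈ HS := by
    intro w
    rw [memHS, hσ]
    simpa using S.one_mem
  have hS'memHS' : ∀ s : G, s ∈ S' → s ∈ HS' := by
    intro s hs
    rw [memHS', (QuotientGroup.eq_one_iff s).mpr (hS'T hs)]
    exact S'.mul_mem (S'.inv_mem (hSS' hσ1S)) hs
  -- Part 1
  have part1 : (HS : Set G) ⊆ (HS' : Set G) := by
    rw [hHS, hHS']
    rintro g ⟨w, s, hs, rfl⟩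
    exact ⟨w, s, hSS' hs, rfl⟩
  -- Key conjugation lemma (A)
  have lemA : (S' : Set G) ⊆ splusSet T σ S →
      ∀ s' : G, s' ∈ S' → ∀ n : G, n ∈ HS → s' * n * s'⁻¹ ∈ HS := by
    intro hplus s' hs' n hn
    set w := (QuotientGroup.mk n : G ⧸ T) with hw
    have hsS : (σ w)⁻¹ * n ∈ S := (memHS n).mp hn
    have hd : (σ w)⁻¹ * s' * σ w * s'⁻¹ ∈ S := (hplus hs').2 w
    have hmk : (QuotientGroup.mk (s' * n * s'⁻¹) : G ⧸ T) = w := by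
      have h1 : (QuotientGroup.mk s' : G ⧸ T) = 1 :=
        (QuotientGroup.eq_one_iff s').mpr (hS'T hs')
      simp [QuotientGroup.mk_mul, QuotientGroup.mk_inv, h1, ← hw]
    rw [memHS, hmk]
    set s := (σ w)⁻¹ * n with hsdef
    have hns : n = σ w * s := by rw [hsdef]; group
    have hcom : s * s'⁻¹ = s'⁻¹ * s :=
      hTab s s'⁻¹ (hST hsS) (T.inv_mem (hS'T hs'))
    have key : (σ w)⁻¹ * (s' * n * s'⁻¹) = ((σ w)⁻¹ * s' * σ w * s'⁻¹) * s := by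
      rw [hns, show (σ w)⁻¹ * (s' * (σ w * s) * s'⁻¹)
        = (σ w)⁻¹ * s' * σ w * (s * s'⁻¹) from by group, hcom]
      group
    rw [key]
    exact S.mul_mem hd hsS
  -- Part 2
  have part2 : (HS.subgroupOf HS').Normal ↔ (S' : Set G) ⊆ splusSet T σ S := by
    constructor
    · intro hN s' hs'
      refine ⟨hS'T hs', fun w => ?_⟩
      have hgH : s' ∈ HS' := hS'memHS' s' hs'
      have hnH : σ w ∈ HS' := part1 (hσHS w)
      have hconj := hN.conj_mem ⟨σ w, hnH⟩
        (Subgroup.mem_subgroupOf.mpr (hσHS w)) ⟨s', hgH⟩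
      have hc : s' * σ w * s'⁻¹ ∈ HS := Subgroup.mem_subgroupOf.mp hconj
      have hmk : (QuotientGroup.mk (s' * σ w * s'⁻¹) : G ⧸ T) = w := by
        have h1 : (QuotientGroup.mk s' : G ⧸ T) = 1 :=
          (QuotientGroup.eq_one_iff s').mpr (hS'T hs')
        simp [QuotientGroup.mk_mul, QuotientGroup.mk_inv, h1, hσ]
      have := (memHS _).mp hc
      rw [hmk] at this
      simpa [mul_assoc] using this
    · intro hplus
      constructor
      intro n hn g
      have hnHS : (n : G) ∈ HS := Subgroup.mem_subgroupOf.mp hn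
      rw [Subgroup.mem_subgroupOf]
      set v := (QuotientGroup.mk (g : G) : G ⧸ T) with hv
      set s' := (σ v)⁻¹ * (g : G) with hs'def
      have hs' : s' ∈ S' := (memHS' (g : G)).mp g.2
      have hgeq : (g : G) = σ v * s' := by rw [hs'def]; group
      have hmid : s' * (n : G) * s'⁻¹ ∈ HS := lemA hplus s' hs' (n : G) hnHS
      have : ((g * n * g⁻¹ : ↥HS') : G) = σ v * (s' * (n : G) * s'⁻¹) * (σ v)⁻¹ := by
        push_cast
        rw [hgeq]
        group
      rw [this]
      exact HS.mul_mem (HS.mul_mem (hσHS v) hmid) (HS.inv_mem (hσHS v))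
  refine ⟨part1, part2, ?_⟩
  intro _h1 _h2
  have hplus : (S' : Set G) ⊆ splusSet T σ S := part2.mp _h1
  -- the homomorphism
  have toS' : ∀ g : ↥HS', (σ (QuotientGroup.mk (g : G)))⁻¹ * (g : G) ∈ S' :=
    fun g => (memHS' (g : G)).mp g.2
  let f : ↥HS' →* ↥S' ⧸ S.subgroupOf S' := MonoidHom.mk'
    (fun g => QuotientGroup.mk ⟨(σ (QuotientGroup.mk (g : G)))⁻¹ * (g : G), toS' g⟩)
    (by
      intro g h
      have hmk : (QuotientGroup.mk ((g : G) * (h : G)) : G ⧸ T)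
          = QuotientGroup.mk (g : G) * QuotientGroup.mk (h : G) := rfl
      have key : ∀ v w : G ⧸ T, ∀ a b : G, a ∈ S' → b ∈ S' →
          (g : G) = σ v * a → (h : G) = σ w * b →
          ((σ (v * w))⁻¹ * ((g : G) * (h : G)))⁻¹ * (a * b) ∈ S := by
        intro v w a b haS' hbS' hg hh
        have hc0 : (σ (v * w))⁻¹ * (σ v * σ w * (σ (v * w))⁻¹) * σ (v * w) ∈ S :=
          hSinv (v * w) _ (hcoc v w)
        have hd : (σ w)⁻¹ * a * σ w * a⁻¹ ∈ S := (hplus haS').2 w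
        have hcomm : ((σ (v * w))⁻¹ * (σ v * σ w * (σ (v * w))⁻¹) * σ (v * w)
              * ((σ w)⁻¹ * a * σ w * a⁻¹)) * (a * b)
            = (a * b) * ((σ (v * w))⁻¹ * (σ v * σ w * (σ (v * w))⁻¹) * σ (v * w)
              * ((σ w)⁻¹ * a * σ w * a⁻¹)) :=
          hTab _ _ (T.mul_mem (hST hc0) (hST hd))
            (T.mul_mem (hS'T haS') (hS'T hbS'))
        have hE : (a * b)⁻¹ * ((σ (v * w))⁻¹ * ((g : G) * (h : G)))
            = (σ (v * w))⁻¹ * (σ v * σ w * (σ (v * w))⁻¹) * σ (v * w)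
              * ((σ w)⁻¹ * a * σ w * a⁻¹) := by
          rw [hg, hh,
            show (a * b)⁻¹ * ((σ (v * w))⁻¹ * (σ v * a * (σ w * b)))
              = b⁻¹ * a⁻¹ * (((σ (v * w))⁻¹ * (σ v * σ w * (σ (v * w))⁻¹) * σ (v * w)
                * ((σ w)⁻¹ * a * σ w * a⁻¹)) * (a * b)) from by group,
            hcomm]
          group
        have hfin : ((σ (v * w))⁻¹ * ((g : G) * (h : G)))⁻¹ * (a * b)
            = ((σ (v * w))⁻¹ * (σ v * σ w * (σ (v * w))⁻¹) * σ (v * w)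
              * ((σ w)⁻¹ * a * σ w * a⁻¹))⁻¹ := by
          rw [← hE]; group
        rw [hfin]
        exact S.inv_mem (S.mul_mem hc0 hd)
      rw [← QuotientGroup.mk_mul, QuotientGroup.eq, Subgroup.mem_subgroupOf]
      push_cast
      rw [hmk]
      exact key _ _ _ _ (toS' g) (toS' h) (by group) (by group))
  have hker : f.ker = HS.subgroupOf HS' := by
    ext g
    rw [MonoidHom.mem_ker, Subgroup.mem_subgroupOf]
    show (QuotientGroup.mk _ : ↥S' ⧸ S.subgroupOf S') = 1 ↔ _
    rw [QuotientGroup.eq_one_iff, Subgroup.mem_subgroupOf]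
    exact (memHS (g : G)).symm
  have hsurj : Function.Surjective f := by
    intro q
    obtain ⟨s, rfl⟩ := QuotientGroup.mk_surjective q
    refine ⟨⟨(s : G), hS'memHS' (s : G) s.2⟩, ?_⟩
    show (QuotientGroup.mk _ : ↥S' ⧸ S.subgroupOf S') = QuotientGroup.mk s
    rw [QuotientGroup.eq, Subgroup.mem_subgroupOf]
    have h1 : (QuotientGroup.mk (s : G) : G ⧸ T) = 1 :=
      (QuotientGroup.eq_one_iff (s : G)).mpr (hS'T s.2)
    have hcom : σ 1 * (s : G) = (s : G) * σ 1 :=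
      hTab _ _ (hST hσ1S) (hS'T s.2)
    push_cast
    rw [h1, show ((σ (1 : G ⧸ T))⁻¹ * (s : G))⁻¹ * (s : G)
        = (s : G)⁻¹ * (σ 1 * (s : G)) from by group, hcom,
      show (s : G)⁻¹ * ((s : G) * σ 1) = σ 1 from by group]
    exact hσ1S
  exact ⟨(QuotientGroup.quotientMulEquivOfEq hker.symm).trans
    (QuotientGroup.quotientKerEquivOfSurjective f hsurj)⟩
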